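/- Let F be a distribution function on ℝ that is max-semi-SD(c) for some c > 0, i.e., F(x) = F(c·x)·H(x) for all x with H a distribution function. Then, with ρ = 1/c, there exists a stationary max-AR(1) process: if X₀ has distribution F, (εₙ) are i.i.d. with distribution H and independent of X₀, and Xₙ = max(ρ·X_{n–1}, εₙ), then every Xₙ has distribution function F. -/

import Mathlib

open MeasureTheory ProbabilityTheory

theorem stmt_10 {Ω : Type*} [MeasurableSpace Ω] (μ : Measure Ω) [IsProbabilityMeasure μ]
    (F H : ℝ → ℝ) (c ρ : ℝ) (hc : 0 < c) (hρ : ρ = 1 / c)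
    (hmssd : ∀ x : ℝ, F x = F (c * x) * H x)
    (X ε : ℕ → Ω → ℝ)
    (hXmeas : ∀ n, Measurable (X n)) (hεmeas : ∀ n, Measurable (ε n))
    (hX0 : ∀ x : ℝ, (μ {ω | X 0 ω ≤ x}).toReal = F x)
    (hε : ∀ n : ℕ, ∀ x : ℝ, (μ {ω | ε n ω ≤ x}).toReal = H x)
    (hindep : ∀ n : ℕ, IndepFun (X n) (ε (n + 1)) μ)
    (hrec : ∀ n : ℕ, ∀ ω : Ω, X (n + 1) ω = max (ρ * X n ω) (ε (n + 1) ω)) :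
    ∀ n : ℕ, ∀ x : ℝ, (μ {ω | X n ω ≤ x}).toReal = F x := by
  have hρpos : 0 < ρ := by rw [hρ]; positivity
  intro n
  induction n with
  | zero => exact hX0
  | succ n ih =>
    intro x
    have hset : {ω | X (n+1) ω ≤ x}
        = (X n ⁻¹' Set.Iic (c * x)) ∩ (ε (n+1) ⁻¹' Set.Iic x) := by
      ext ω
      simp only [Set.mem_setOf_eq, Set.mem_inter_iff, Set.mem_preimage, Set.mem_Iic,
        hrec n ω, max_le_iff]
      constructor
      · rintro ⟨h1, h2⟩
        refine ⟨?_, h2⟩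
        have hxr : X n ω ≤ x / ρ := by rwa [le_div_iff₀ hρpos, mul_comm]
        refine hxr.trans_eq ?_
        rw [hρ]; field_simp
      · rintro ⟨h1, h2⟩
        refine ⟨?_, h2⟩
        have : ρ * X n ω ≤ ρ * (c * x) := by
          exact mul_le_mul_of_nonneg_left h1 hρpos.le
        refine this.trans_eq ?_
        rw [hρ]; field_simp
    rw [hset]
    have hind := (hindep n).measure_inter_preimage_eq_mul (Set.Iic (c*x)) (Set.Iic x)
      measurableSet_Iic measurableSet_Iic
    rw [hind, ENNReal.toReal_mul]
    have h1 : (μ (X n ⁻¹' Set.Iic (c * x))).toReal = F (c * x) := ih (c * x)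
    have h2 : (μ (ε (n+1) ⁻¹' Set.Iic x)).toReal = H x := hε (n+1) x
    rw [h1, h2, ← hmssd]
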